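/- With m ≥ 2 and D, E, F ⊆ [m] with |D|, |E|, |F| ≤ m−1, the kernel of the map f : a ↦ c_a = (a·l)_{l∈L}, i.e. the set { a = (p, q+ur) : p, q, r ∈ Z_2^m and c_a = 0 }, has exactly 2 elements if |D| = |E| = m−1, and is equal to {0} otherwise. -/

import Mathlib

open Finset

/-- The ring Z_2[u] with u² = 0: dual numbers over Z_2. -/
abbrev R2 : Type := DualNumber (ZMod 2)

/-- The support of a vector in Z_2^m, as a finset of coordinates. -/
def suppF {m : ℕ} (w : Fin m → ZMod 2) : Finset (Fin m) :=
  Finset.univ.filter fun i => w i ≠ 0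

/-- Inner product ⟨x,y⟩ = Σ_i x_i y_i in Z_2. -/
def ip {m : ℕ} (x y : Fin m → ZMod 2) : ZMod 2 := ∑ i, x i * y i

/-- The defining set L = Δ_D^c × Δ_E^c × Δ_F^c, parametrized by triples (t₁,t₂,t₃). -/
def Lset (m : ℕ) (D E F : Finset (Fin m)) :
    Finset ((Fin m → ZMod 2) × (Fin m → ZMod 2) × (Fin m → ZMod 2)) :=
  Finset.univ.filter fun t => ¬ suppF t.1 ⊆ D ∧ ¬ suppF t.2.1 ⊆ E ∧ ¬ suppF t.2.2 ⊆ F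

/-- The codeword c_a = (a·l)_{l∈L} for a = (p, q+ur), where
a·l = ⟨q,t₂⟩ + u(⟨p,t₁⟩ + ⟨q,t₃⟩ + ⟨r,t₂⟩). -/
def cword {m : ℕ} (D E F : Finset (Fin m)) (p q r : Fin m → ZMod 2) :
    ↥(Lset m D E F) → R2 := fun l =>
  TrivSqZeroExt.inl (ip q l.val.2.1) +
    TrivSqZeroExt.inr (ip p l.val.1 + ip q l.val.2.2 + ip r l.val.2.1)

/-- Lee weight of a single element q + ur of Z_2[u]: wt_H(r) + wt_H(q+r). -/
def leeWtOne (x : R2) : ℕ :=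
  (if TrivSqZeroExt.snd x ≠ 0 then 1 else 0) +
    (if TrivSqZeroExt.fst x + TrivSqZeroExt.snd x ≠ 0 then 1 else 0)

/-- Lee weight of a vector over Z_2[u]: sum of coordinate Lee weights. -/
def leeWt {ι : Type} [Fintype ι] (c : ι → R2) : ℕ := ∑ i, leeWtOne (c i)

/-- The Gray map: coordinatewise q + ur ↦ (r, q + r). -/
def gray {ι : Type} (c : ι → R2) : ι ⊕ ι → ZMod 2 :=
  Sum.elim (fun i => TrivSqZeroExt.snd (c i))
    (fun i => TrivSqZeroExt.fst (c i) + TrivSqZeroExt.snd (c i))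

/-- The code C_L as a set of words over Z_2[u] indexed by L. -/
def CL (m : ℕ) (D E F : Finset (Fin m)) : Set (↥(Lset m D E F) → R2) :=
  { c | ∃ p q r : Fin m → ZMod 2, c = cword D E F p q r }

namespace Stmt9Aux

variable {m : ℕ}

def ev (j : Fin m) : Fin m → ZMod 2 := fun i => if i = j then 1 else 0

lemma ip_ev (x : Fin m → ZMod 2) (j : Fin m) : ip x (ev j) = x j := by
  simp [ip, ev, mul_ite]

lemma ip_ev_left (x : Fin m → ZMod 2) (j : Fin m) : ip (ev j) x = x j := by
  simp [ip, ev, ite_mul]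

lemma ip_add (x t t' : Fin m → ZMod 2) : ip x (t + t') = ip x t + ip x t' := by
  simp [ip, mul_add, Finset.sum_add_distrib]

lemma ip_zero_left (t : Fin m → ZMod 2) : ip (0 : Fin m → ZMod 2) t = 0 := by
  simp [ip]

lemma mem_suppF_ev (j : Fin m) : j ∈ suppF (ev j) := by
  simp [suppF, ev]

lemma mem_suppF_add {i j : Fin m} (hij : i ≠ j) : j ∈ suppF (ev i + ev j) := by
  unfold suppF; rw [Finset.mem_filter]; simp [ev, hij.symm]

lemma not_subset_ev {S : Finset (Fin m)} {j : Fin m} (hj : j ∉ S) :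
    ¬ suppF (ev j) ⊆ S := fun h => hj (h (mem_suppF_ev j))

lemma not_subset_add {S : Finset (Fin m)} {i j : Fin m} (hij : i ≠ j) (hj : j ∉ S) :
    ¬ suppF (ev i + ev j) ⊆ S := fun h => hj (h (mem_suppF_add hij))

lemma zmod2_ne_zero {a : ZMod 2} (h : a ≠ 0) : a = 1 := by revert h; revert a; decide

lemma const_val {S : Finset (Fin m)} {x : Fin m → ZMod 2} {c : ZMod 2}
    (h : ∀ t, ¬ suppF t ⊆ S → ip x t = c) {j : Fin m} (hj : j ∉ S) (i : Fin m) :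
    x i = if i ∈ S then 0 else c := by
  by_cases hi : i ∈ S
  · have hij : i ≠ j := fun e => hj (e ▸ hi)
    have h1 : x i + x j = c := by
      have := h (ev i + ev j) (not_subset_add hij hj)
      rwa [ip_add, ip_ev, ip_ev] at this
    have h2 : x j = c := by rw [← ip_ev x j]; exact h _ (not_subset_ev hj)
    have : x i = (x i + x j) - x j := by ring
    rw [this, h1, h2, sub_self, if_pos hi]
  · rw [if_neg hi, ← ip_ev x i]; exact h _ (not_subset_ev hi)

lemma const_zero {S : Finset (Fin m)} {x : Fin m → ZMod 2} {c : ZMod 2}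
    (h : ∀ t, ¬ suppF t ⊆ S → ip x t = c) {j k : Fin m} (hj : j ∉ S) (hk : k ∉ S)
    (hjk : j ≠ k) : c = 0 := by
  have h1 : x j + x k = c := by
    have := h (ev j + ev k) (not_subset_add hjk hk)
    rwa [ip_add, ip_ev, ip_ev] at this
  have h2 : x j = c := by rw [← ip_ev x j]; exact h _ (not_subset_ev hj)
  have h3 : x k = c := by rw [← ip_ev x k]; exact h _ (not_subset_ev hk)
  rw [h2, h3] at h1
  have h0 : c + c = 0 := by
    have h2' : (2 : ZMod 2) = 0 := by decide
    calc c + c = 2 * c := by ring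
    _ = 0 := by rw [h2', zero_mul]
  rw [h0] at h1
  exact h1.symm

lemma zero_of_const {S : Finset (Fin m)} {x : Fin m → ZMod 2}
    (h : ∀ t, ¬ suppF t ⊆ S → ip x t = 0) {j : Fin m} (hj : j ∉ S) : x = 0 := by
  funext i
  have := const_val h hj i
  simpa using this

lemma exists_notMem {S : Finset (Fin m)} (hm : 2 ≤ m) (hS : S.card ≤ m - 1) :
    ∃ j, j ∉ S := by
  by_contra h
  push_neg at h
  have : S = Finset.univ := Finset.eq_univ_iff_forall.mpr h
  rw [this] at hS
  simp [Finset.card_univ] at hS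
  omega

lemma exists_two_notMem {S : Finset (Fin m)} (hS : S.card ≤ m - 2) (hm : 2 ≤ m) :
    ∃ j ∉ S, ∃ k ∉ S, j ≠ k := by
  have hc : 1 < Sᶜ.card := by
    rw [Finset.card_compl]
    simp only [Fintype.card_fin]
    omega
  obtain ⟨j, hj, k, hk, hjk⟩ := Finset.one_lt_card.mp hc
  exact ⟨j, by simpa using hj, k, by simpa using hk, hjk⟩

lemma unique_notMem {S : Finset (Fin m)} (hm : 2 ≤ m) (hS : S.card = m - 1)
    {j : Fin m} (hj : j ∉ S) : ∀ k, k ∉ S → k = j := by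
  intro k hk
  by_contra hkj
  have hc : 1 < Sᶜ.card := Finset.one_lt_card.mpr
    ⟨j, by simpa using hj, k, by simpa using hk, fun e => hkj e.symm⟩
  rw [Finset.card_compl] at hc
  simp only [Fintype.card_fin] at hc
  omega

end Stmt9Aux

namespace Stmt9Aux

lemma cword_eq_zero_iff {m : ℕ} (D E F : Finset (Fin m)) (p q r : Fin m → ZMod 2) :
    cword D E F p q r = 0 ↔
      ∀ t₁ t₂ t₃ : Fin m → ZMod 2, ¬ suppF t₁ ⊆ D → ¬ suppF t₂ ⊆ E → ¬ suppF t₃ ⊆ F →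
        ip q t₂ = 0 ∧ ip p t₁ + ip q t₃ + ip r t₂ = 0 := by
  constructor
  · intro h t₁ t₂ t₃ h1 h2 h3
    have hmem : ((t₁, t₂, t₃) : (Fin m → ZMod 2) × (Fin m → ZMod 2) × (Fin m → ZMod 2)) ∈
        Lset m D E F := by
      simp [Lset, h1, h2, h3]
    have hc := congrFun h ⟨(t₁, t₂, t₃), hmem⟩
    simpa [cword, TrivSqZeroExt.ext_iff] using hc
  · intro h
    funext l
    obtain ⟨⟨t₁, t₂, t₃⟩, hl⟩ := l
    simp only [Lset, Finset.mem_filter, Finset.mem_univ, true_and] at hl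
    obtain ⟨h1, h2, h3⟩ := hl
    obtain ⟨e1, e2⟩ := h t₁ t₂ t₃ h1 h2 h3
    simp [cword, TrivSqZeroExt.ext_iff, e1, e2]

lemma kernel_char {m : ℕ} (hm : 2 ≤ m) (D E F : Finset (Fin m))
    (hD : D.card ≤ m - 1) (hE : E.card ≤ m - 1) (hF : F.card ≤ m - 1)
    (p q r : Fin m → ZMod 2) :
    cword D E F p q r = 0 ↔
      q = 0 ∧ ∃ c : ZMod 2,
        (∀ t₁, ¬ suppF t₁ ⊆ D → ip p t₁ = c) ∧
        (∀ t₂, ¬ suppF t₂ ⊆ E → ip r t₂ = c) := by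
  obtain ⟨jD, hjD⟩ := exists_notMem hm hD
  obtain ⟨jE, hjE⟩ := exists_notMem hm hE
  obtain ⟨jF, hjF⟩ := exists_notMem hm hF
  rw [cword_eq_zero_iff]
  constructor
  · intro h
    have hq0 : q = 0 := by
      apply zero_of_const (S := E) _ hjE
      intro t₂ ht₂
      exact (h (ev jD) t₂ (ev jF) (not_subset_ev hjD) ht₂ (not_subset_ev hjF)).1
    subst hq0
    refine ⟨rfl, ip p (ev jD), ?_, ?_⟩
    · intro t₁ ht₁
      have h2 := (h t₁ (ev jE) (ev jF) ht₁ (not_subset_ev hjE) (not_subset_ev hjF)).2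
      have h3 := (h (ev jD) (ev jE) (ev jF) (not_subset_ev hjD) (not_subset_ev hjE)
        (not_subset_ev hjF)).2
      rw [ip_zero_left] at h2 h3
      have heq : ip p t₁ + 0 + ip r (ev jE) = ip p (ev jD) + 0 + ip r (ev jE) :=
        h2.trans h3.symm
      have := add_right_cancel heq
      simpa using this
    · intro t₂ ht₂
      have h2 := (h (ev jD) t₂ (ev jF) (not_subset_ev hjD) ht₂ (not_subset_ev hjF)).2
      rw [ip_zero_left] at h2
      have hcc : ip r t₂ + ip r t₂ = 0 := by
        calc ip r t₂ + ip r t₂ = 2 * ip r t₂ := by ring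
        _ = 0 := by rw [show (2 : ZMod 2) = 0 by decide, zero_mul]
      calc ip r t₂ = (ip p (ev jD) + 0 + ip r t₂) + ip p (ev jD) + 0 := by
            rw [show ip p (ev jD) + 0 + ip r t₂ = ip r t₂ + ip p (ev jD) + 0 by ring]
            calc ip r t₂ = ip r t₂ + 0 := by rw [add_zero]
            _ = ip r t₂ + (ip p (ev jD) + ip p (ev jD)) := by
                  rw [show ip p (ev jD) + ip p (ev jD) = 2 * ip p (ev jD) by ring,
                    show (2 : ZMod 2) = 0 by decide, zero_mul]
            _ = ip r t₂ + ip p (ev jD) + 0 + ip p (ev jD) + 0 := by ring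
            _ = _ := by ring
      _ = 0 + ip p (ev jD) + 0 := by rw [h2]
      _ = ip p (ev jD) := by ring
  · rintro ⟨rfl, c, hp, hr⟩
    intro t₁ t₂ t₃ h1 h2 h3
    refine ⟨ip_zero_left t₂, ?_⟩
    rw [ip_zero_left, hp t₁ h1, hr t₂ h2]
    calc c + 0 + c = 2 * c := by ring
    _ = 0 := by rw [show (2 : ZMod 2) = 0 by decide, zero_mul]

end Stmt9Aux

open Stmt9Aux

/-- the kernel of f : a ↦ c_a has exactly 2 elements if |D| = |E| = m−1,
and equals {0} otherwise. -/
theorem stmt9 (m : ℕ) (hm : 2 ≤ m) (D E F : Finset (Fin m))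
    (hD : D.card ≤ m - 1) (hE : E.card ≤ m - 1) (hF : F.card ≤ m - 1) :
    ((D.card = m - 1 ∧ E.card = m - 1) →
      Nat.card {a : (Fin m → ZMod 2) × (Fin m → ZMod 2) × (Fin m → ZMod 2) //
        cword D E F a.1 a.2.1 a.2.2 = 0} = 2) ∧
    (¬ (D.card = m - 1 ∧ E.card = m - 1) →
      {a : (Fin m → ZMod 2) × (Fin m → ZMod 2) × (Fin m → ZMod 2) |
        cword D E F a.1 a.2.1 a.2.2 = 0} = {(0, 0, 0)}) := by
  obtain ⟨jD, hjD⟩ := exists_notMem hm hD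
  obtain ⟨jE, hjE⟩ := exists_notMem hm hE
  constructor
  · rintro ⟨hDc, hEc⟩
    have huD := unique_notMem hm hDc hjD
    have huE := unique_notMem hm hEc hjE
    -- the kernel set equals {0, (ev jD, 0, ev jE)}
    have hset : {a : (Fin m → ZMod 2) × (Fin m → ZMod 2) × (Fin m → ZMod 2) |
        cword D E F a.1 a.2.1 a.2.2 = 0} =
        ({((0 : Fin m → ZMod 2), (0 : Fin m → ZMod 2), (0 : Fin m → ZMod 2)),
          (ev jD, 0, ev jE)} : Set _) := by
      ext ⟨p, q, r⟩
      simp only [Set.mem_setOf_eq, Set.mem_insert_iff, Set.mem_singleton_iff,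
        Prod.mk.injEq]
      rw [kernel_char hm D E F hD hE hF]
      constructor
      · rintro ⟨hq, c, hp, hr⟩
        have hpv := fun i => const_val hp hjD i
        have hrv := fun i => const_val hr hjE i
        have hcs : ∀ c : ZMod 2, c = 0 ∨ c = 1 := by decide
        rcases hcs c with hc | hc
        · subst hc
          left
          refine ⟨?_, hq, ?_⟩ <;> funext i
          · simpa using hpv i
          · simpa using hrv i
        · subst hc
          right
          refine ⟨?_, hq, ?_⟩ <;> funext i
          · rw [hpv i, ev]
            by_cases hi : i ∈ D
            · have : ¬ i = jD := fun e => hjD (e ▸ hi)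
              simp [hi, this]
            · simp [hi, huD i hi, hjD]
          · rw [hrv i, ev]
            by_cases hi : i ∈ E
            · have : ¬ i = jE := fun e => hjE (e ▸ hi)
              simp [hi, this]
            · simp [hi, huE i hi, hjE]
      · rintro (⟨rfl, rfl, rfl⟩ | ⟨rfl, rfl, rfl⟩)
        · exact ⟨rfl, 0, fun t _ => ip_zero_left t, fun t _ => ip_zero_left t⟩
        · refine ⟨rfl, 1, ?_, ?_⟩
          · intro t₁ ht₁
            rw [ip_ev_left]
            obtain ⟨i, hi, hiD⟩ := Finset.not_subset.mp ht₁
            have : i = jD := huD i hiD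
            subst this
            simp only [suppF, Finset.mem_filter] at hi
            exact zmod2_ne_zero hi.2
          · intro t₂ ht₂
            rw [ip_ev_left]
            obtain ⟨i, hi, hiE⟩ := Finset.not_subset.mp ht₂
            have : i = jE := huE i hiE
            subst this
            simp only [suppF, Finset.mem_filter] at hi
            exact zmod2_ne_zero hi.2
    have hne : ((0 : Fin m → ZMod 2), (0 : Fin m → ZMod 2), (0 : Fin m → ZMod 2)) ≠
        (ev jD, (0 : Fin m → ZMod 2), ev jE) := by
      intro h
      have := congrFun (congrArg Prod.fst h) jD
      simp [ev] at this
    have : Nat.card {a : (Fin m → ZMod 2) × (Fin m → ZMod 2) × (Fin m → ZMod 2) //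
        cword D E F a.1 a.2.1 a.2.2 = 0} =
        ({((0 : Fin m → ZMod 2), (0 : Fin m → ZMod 2), (0 : Fin m → ZMod 2)),
          (ev jD, 0, ev jE)} : Set _).ncard := by
      rw [← Nat.card_coe_set_eq, ← hset]
      rfl
    rw [this, Set.ncard_pair hne]
  · intro hnot
    have hc0 : ∀ (p q r : Fin m → ZMod 2), cword D E F p q r = 0 →
        p = 0 ∧ q = 0 ∧ r = 0 := by
      intro p q r h
      rw [kernel_char hm D E F hD hE hF] at h
      obtain ⟨hq, c, hp, hr⟩ := h
      have hc : c = 0 := by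
        rcases (show D.card ≤ m - 2 ∨ E.card ≤ m - 2 by omega) with hle | hle
        · obtain ⟨j, hj, k, hk, hjk⟩ := exists_two_notMem hle hm
          exact const_zero hp hj hk hjk
        · obtain ⟨j, hj, k, hk, hjk⟩ := exists_two_notMem hle hm
          exact const_zero hr hj hk hjk
      subst hc
      exact ⟨zero_of_const hp hjD, hq, zero_of_const hr hjE⟩
    ext ⟨p, q, r⟩
    simp only [Set.mem_setOf_eq, Set.mem_singleton_iff, Prod.mk.injEq]
    constructor
    · intro h
      exact hc0 p q r h
    · rintro ⟨rfl, rfl, rfl⟩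
      rw [kernel_char hm D E F hD hE hF]
      exact ⟨rfl, 0, fun t _ => ip_zero_left t, fun t _ => ip_zero_left t⟩
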